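/- arXiv:2010.13380 — 6 statements merged into one kernel-verified Lean document; each statement's English description precedes it below -/
import Mathlib

section
/- If S = ⌊b·N^2⌋ with constant b > 0, then the probability of complete separation P_c(N) = S!/((S-N)!·S^N) tends to e^{-1/(2b)} as N → ∞. -/
open Filter Finset

private lemma log_err_bound {x : ℝ} (h0 : 0 ≤ x) (h1 : x ≤ 1/2) :
    |Real.log (1 - x) + x| ≤ 2 * x ^ 2 := by
  have hx : (0:ℝ) < 1 - x := by linarith
  have hub : Real.log (1 - x) ≤ -x := by
    have := Real.log_le_sub_one_of_pos hx; linarith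
  have hlb : 1 - (1 - x)⁻¹ ≤ Real.log (1 - x) := Real.one_sub_inv_le_log_of_pos hx
  have heq : 1 - (1 - x)⁻¹ = -(x / (1 - x)) := by field_simp; ring
  have key : x / (1 - x) ≤ x + 2 * x ^ 2 := by
    rw [div_le_iff₀ hx]; nlinarith
  rw [abs_of_nonpos (by linarith)]
  linarith [heq ▸ hlb]

private lemma sum_range_cast (N : ℕ) :
    ∑ i ∈ Finset.range N, (i : ℝ) = N * (N - 1) / 2 := by
  induction N with
  | zero => simp
  | succ n ih => rw [Finset.sum_range_succ, ih]; push_cast; ring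

/-- If `S = ⌊b·N^2⌋` with constant `b > 0`, then the probability of complete
separation `P_c(N) = S!/((S-N)!·S^N)` tends to `e^{-1/(2b)}` as `N → ∞`. -/
theorem complete_separation_prob_tendsto_quadratic (b : ℝ) (hb : 0 < b) :
    Tendsto (fun N : ℕ =>
        ((⌊b * (N : ℝ) ^ 2⌋₊).factorial : ℝ) /
          (((⌊b * (N : ℝ) ^ 2⌋₊ - N).factorial : ℝ) * ((⌊b * (N : ℝ) ^ 2⌋₊ : ℝ)) ^ N))
      atTop (nhds (Real.exp (-1 / (2 * b)))) := by
  set S : ℕ → ℕ := fun N => ⌊b * (N : ℝ) ^ 2⌋₊ with hSdef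
  -- Step A : S N / N² → b
  have h2 : Tendsto (fun N : ℕ => 1 / (N:ℝ) * (1 / (N:ℝ))) atTop (nhds 0) := by
    simpa using (tendsto_one_div_atTop_nhds_zero_nat (𝕜 := ℝ)).mul tendsto_one_div_atTop_nhds_zero_nat
  have hA : Tendsto (fun N : ℕ => (S N : ℝ) / (N : ℝ) ^ 2) atTop (nhds b) := by
    have hlow : Tendsto (fun N : ℕ => b - 1 / (N:ℝ) * (1 / (N:ℝ))) atTop (nhds b) := by
      simpa using (tendsto_const_nhds (x := b)).sub h2
    apply tendsto_of_tendsto_of_tendsto_of_le_of_le' hlow tendsto_const_nhds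
    · filter_upwards [eventually_ge_atTop 1] with N hN
      have hN0 : (N:ℝ) ≠ 0 := by positivity
      have hN' : (0:ℝ) < (N:ℝ)^2 := by positivity
      have h1 : b * (N:ℝ)^2 - 1 < (S N : ℝ) := Nat.sub_one_lt_floor _
      rw [le_div_iff₀ hN']
      have heq : (b - 1/(N:ℝ) * (1/(N:ℝ))) * (N:ℝ)^2 = b * (N:ℝ)^2 - 1 := by
        field_simp
      rw [heq]; linarith
    · filter_upwards [eventually_ge_atTop 1] with N hN
      have hN' : (0:ℝ) < (N:ℝ)^2 := by positivity
      rw [div_le_iff₀ hN']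
      exact Nat.floor_le (by positivity)
  have hInv : Tendsto (fun N : ℕ => (N:ℝ)^2 / (S N : ℝ)) atTop (nhds b⁻¹) := by
    simpa [inv_div] using hA.inv₀ hb.ne'
  -- Step B : eventually 2N ≤ S N
  have hB : ∀ᶠ N : ℕ in atTop, 2 * N ≤ S N := by
    filter_upwards [hA.eventually (lt_mem_nhds (show b/2 < b by linarith)),
      eventually_ge_atTop (max 1 ⌈4/b⌉₊)] with N h1 h2'
    have hN1 : 1 ≤ N := le_trans (le_max_left _ _) h2'
    have hN4 : (4:ℝ)/b ≤ N :=
      le_trans (Nat.le_ceil _) (Nat.cast_le.2 (le_trans (le_max_right _ _) h2'))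
    have hNpos : (0:ℝ) < N := by exact_mod_cast hN1
    have hq : b/2 * (N:ℝ)^2 < S N := by
      calc b/2*(N:ℝ)^2 < (S N:ℝ)/(N:ℝ)^2 * (N:ℝ)^2 :=
            mul_lt_mul_of_pos_right h1 (by positivity)
        _ = S N := by field_simp
    have h4 : (4:ℝ) ≤ b * N := by
      rw [div_le_iff₀ hb] at hN4; linarith
    have h5 : (2*N : ℝ) ≤ b/2 * (N:ℝ)^2 := by nlinarith
    have : ((2*N : ℕ):ℝ) < (S N : ℝ) := by push_cast; linarith
    exact_mod_cast this.le
  -- main term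
  have hfrac : Tendsto (fun N : ℕ => ((N:ℝ)-1)/N) atTop (nhds 1) := by
    apply Tendsto.congr' (f₁ := fun N : ℕ => 1 - 1/(N:ℝ))
    · filter_upwards [eventually_ge_atTop 1] with N hN
      have hN0 : (N:ℝ) ≠ 0 := by positivity
      field_simp
    · simpa using (tendsto_const_nhds (x := (1:ℝ))).sub tendsto_one_div_atTop_nhds_zero_nat
  have hm : Tendsto (fun N : ℕ => (∑ i ∈ Finset.range N, (i:ℝ)/(S N))) atTop
      (nhds (1/(2*b))) := by
    have h0 : Tendsto (fun N : ℕ => (N:ℝ)^2/(S N) * (((N:ℝ)-1)/N) * (1/2)) atTop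
        (nhds (b⁻¹ * 1 * (1/2))) := (hInv.mul hfrac).mul tendsto_const_nhds
    have hval : b⁻¹ * 1 * (1/2) = 1/(2*b) := by field_simp
    rw [hval] at h0
    apply Tendsto.congr' _ h0
    filter_upwards [eventually_ge_atTop 1] with N hN
    have hN0 : (N:ℝ) ≠ 0 := by positivity
    rw [← Finset.sum_div, sum_range_cast]
    rcases eq_or_ne ((S N : ℝ)) 0 with hS0 | hS0
    · simp [hS0]
    · field_simp
  -- error term
  have he : Tendsto (fun N : ℕ =>
      ∑ i ∈ Finset.range N, (Real.log (1 - (i:ℝ)/(S N)) + (i:ℝ)/(S N))) atTop (nhds 0) := by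
    have hbnd : Tendsto (fun N : ℕ => 2 * (1/(N:ℝ)) * ((N:ℝ)^2/(S N))^2) atTop
        (nhds (2 * 0 * (b⁻¹)^2)) :=
      ((tendsto_const_nhds (x := (2:ℝ))).mul tendsto_one_div_atTop_nhds_zero_nat).mul
        (hInv.pow 2)
    rw [show (2:ℝ) * 0 * (b⁻¹)^2 = 0 by ring] at hbnd
    apply squeeze_zero_norm' _ hbnd
    filter_upwards [hB, eventually_ge_atTop 1] with N hBN hN1
    have hN0 : (N:ℝ) ≠ 0 := by positivity
    have hSpos : 0 < S N := by omega
    have hSR : (0:ℝ) < S N := by exact_mod_cast hSpos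
    have hNS : (N:ℝ) / (S N) ≤ 1/2 := by
      rw [div_le_iff₀ hSR]
      have : (2*N : ℝ) ≤ S N := by exact_mod_cast hBN
      linarith
    have hterm : ∀ i ∈ Finset.range N,
        ‖Real.log (1 - (i:ℝ)/(S N)) + (i:ℝ)/(S N)‖ ≤ 2 * ((N:ℝ)/(S N))^2 := by
      intro i hi
      have hiN : (i:ℝ) < N := by exact_mod_cast Finset.mem_range.1 hi
      have hx0 : 0 ≤ (i:ℝ)/(S N) := by positivity
      have hxle : (i:ℝ)/(S N) ≤ (N:ℝ)/(S N) := by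
        gcongr
      calc ‖Real.log (1 - (i:ℝ)/(S N)) + (i:ℝ)/(S N)‖
          ≤ 2 * ((i:ℝ)/(S N))^2 := log_err_bound hx0 (hxle.trans hNS)
        _ ≤ 2 * ((N:ℝ)/(S N))^2 := by nlinarith
    calc ‖∑ i ∈ Finset.range N, (Real.log (1 - (i:ℝ)/(S N)) + (i:ℝ)/(S N))‖
        ≤ ∑ i ∈ Finset.range N, ‖Real.log (1 - (i:ℝ)/(S N)) + (i:ℝ)/(S N)‖ :=
          norm_sum_le _ _
      _ ≤ ∑ _i ∈ Finset.range N, 2 * ((N:ℝ)/(S N))^2 := Finset.sum_le_sum hterm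
      _ = N * (2 * ((N:ℝ)/(S N))^2) := by rw [Finset.sum_const, Finset.card_range]; ring
      _ = 2 * (1/(N:ℝ)) * ((N:ℝ)^2/(S N))^2 := by field_simp
  -- the log sum
  have hC : Tendsto (fun N : ℕ => ∑ i ∈ Finset.range N, Real.log (1 - (i:ℝ)/(S N)))
      atTop (nhds (-1/(2*b))) := by
    have h0 := he.sub hm
    rw [show (0:ℝ) - 1/(2*b) = -1/(2*b) by ring] at h0
    apply Tendsto.congr _ h0
    intro N
    rw [← Finset.sum_sub_distrib]
    congr 1; ext i; ring
  -- conclude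
  have hexp : Tendsto (fun N : ℕ =>
      Real.exp (∑ i ∈ Finset.range N, Real.log (1 - (i:ℝ)/(S N)))) atTop
      (nhds (Real.exp (-1/(2*b)))) := (Real.continuous_exp.tendsto _).comp hC
  apply Tendsto.congr' _ hexp
  filter_upwards [hB, eventually_ge_atTop 1] with N hBN hN1
  have hSN : N ≤ S N := by omega
  have hSpos : 0 < S N := by omega
  have hSR : (0:ℝ) < S N := by exact_mod_cast hSpos
  have hfact : ((S N - N).factorial : ℝ) * ((S N).descFactorial N : ℝ)
      = ((S N).factorial : ℝ) := by
    exact_mod_cast congrArg (Nat.cast (R := ℝ)) (Nat.factorial_mul_descFactorial hSN)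
  have hpos : ∀ i ∈ Finset.range N, 0 < 1 - (i:ℝ)/(S N) := by
    intro i hi
    have hiN : i < N := Finset.mem_range.1 hi
    have : (i:ℝ) < S N := by exact_mod_cast lt_of_lt_of_le hiN hSN
    have : (i:ℝ)/(S N) < 1 := (div_lt_one hSR).2 this
    linarith
  rw [Real.exp_sum]
  have hprod : ∀ i ∈ Finset.range N,
      Real.exp (Real.log (1 - (i:ℝ)/(S N))) = 1 - (i:ℝ)/(S N) := fun i hi =>
    Real.exp_log (hpos i hi)
  rw [Finset.prod_congr rfl hprod]
  have hdesc : ((S N).descFactorial N : ℝ) = ∏ i ∈ Finset.range N, ((S N : ℝ) - i) := by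
    rw [Nat.descFactorial_eq_prod_range, Nat.cast_prod]
    refine Finset.prod_congr rfl fun i hi => ?_
    have hiS : i ≤ S N := le_trans (Finset.mem_range.1 hi).le hSN
    exact Nat.cast_sub hiS
  calc ∏ i ∈ Finset.range N, (1 - (i:ℝ)/(S N))
      = ∏ i ∈ Finset.range N, ((S N : ℝ) - i) / (S N : ℝ) := by
        refine Finset.prod_congr rfl fun i hi => ?_
        field_simp
    _ = (∏ i ∈ Finset.range N, ((S N : ℝ) - i)) / ((S N : ℝ)) ^ N := by
        rw [Finset.prod_div_distrib, Finset.prod_const, Finset.card_range]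
    _ = ((S N).factorial : ℝ) / (((S N - N).factorial : ℝ) * ((S N : ℝ)) ^ N) := by
        rw [← hdesc, ← hfact]
        have hne : ((S N - N).factorial : ℝ) ≠ 0 := by
          exact_mod_cast (Nat.factorial_pos _).ne'
        field_simp
end

section
/- For 1 < a < 2 and b > 0, the limit as N → ∞ of (1/e)^N · (bN^a/(bN^a - N))^{bN^a - N + 1/2} equals 0. -/
open Filter

lemma neg_log_le_aux (r : ℝ) (h0 : 0 ≤ r) (h8 : r ≤ 1/8) :
    -Real.log (1 - r) ≤ r + 7/8 * r^2 := by
  have h1 : (0:ℝ) < 1 - r := by linarith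
  set x := r + 7/8 * r^2 with hx
  have hx0 : 0 ≤ x := by rw [hx]; positivity
  rw [neg_le, Real.le_log_iff_exp_le h1]
  have h2 : (1 + x/2)^2 ≤ Real.exp x := by
    have h3 : Real.exp x = Real.exp (x/2) * Real.exp (x/2) := by
      rw [← Real.exp_add]; ring_nf
    have h4 := Real.add_one_le_exp (x/2)
    nlinarith [Real.exp_pos (x/2)]
  have hc3 : r^3 ≤ (1/8)*r^2 := by nlinarith
  have hc4 : r^4 ≤ (1/64)*r^2 := by nlinarith [sq_nonneg r]
  have hc5 : r^5 ≤ (1/512)*r^2 := by nlinarith [sq_nonneg r, pow_nonneg h0 3]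
  have hkey : 1 ≤ (1-r) * (1 + x/2)^2 := by rw [hx]; nlinarith
  have hex : 1 ≤ (1-r) * Real.exp x := le_trans hkey (by nlinarith)
  calc Real.exp (-x) = 1 / Real.exp x := by rw [Real.exp_neg, one_div]
    _ ≤ 1 - r := by rw [div_le_iff₀ (Real.exp_pos x)]; linarith

/-- For `1 < a < 2` and `b > 0`, the limit as `N → ∞` (over positive reals) of
`(1/e)^N · (bN^a/(bN^a - N))^{bN^a - N + 1/2}` equals `0`. -/
theorem stirling_limit_zero (a b : ℝ) (ha : 1 < a ∧ a < 2) (hb : 0 < b) :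
    Tendsto (fun N : ℝ =>
        (1 / Real.exp 1) ^ N *
          (b * N ^ a / (b * N ^ a - N)) ^ (b * N ^ a - N + 1 / 2))
      atTop (nhds 0) := by
  obtain ⟨ha1, ha2⟩ := ha
  have h2a : (0:ℝ) < 2 - a := by linarith
  have ha1' : (0:ℝ) < a - 1 := by linarith
  set f : ℝ → ℝ := fun N => -N +
      Real.log (b * N ^ a / (b * N ^ a - N)) * (b * N ^ a - N + 1 / 2) with hfdef
  -- the eventual set of nice N
  have hev : ∀ᶠ N : ℝ in atTop, 1 ≤ N ∧ 8 / b ≤ N ^ (a - 1) := by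
    filter_upwards [eventually_ge_atTop (1:ℝ),
      (tendsto_rpow_atTop ha1').eventually_ge_atTop (8 / b)] with N h1 h2
    exact ⟨h1, h2⟩
  -- basic facts on that set
  have hfacts : ∀ N : ℝ, 1 ≤ N → 8 / b ≤ N ^ (a - 1) →
      0 < N ∧ 8 * N ≤ b * N ^ a := by
    intro N h1 h2
    have hN0 : (0:ℝ) < N := lt_of_lt_of_le one_pos h1
    constructor
    · exact hN0
    · have h3 : 8 ≤ b * N ^ (a - 1) := by
        rw [div_le_iff₀ hb] at h2; linarith [h2]
      have h4 : b * N ^ (a - 1) * N ≤ b * N ^ a := by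
        rw [mul_assoc, ← Real.rpow_add_one hN0.ne' (a - 1)]
        ring_nf
        exact le_refl _
      nlinarith
  -- f tends to atBot
  have hfb : Tendsto f atTop atBot := by
    apply tendsto_atBot_mono' atTop (f₁ := fun N : ℝ => -(N ^ (2 - a) / (8 * b)) + 1)
    · filter_upwards [hev] with N hN
      obtain ⟨h1, h2⟩ := hN
      obtain ⟨hN0, h8N⟩ := hfacts N h1 h2
      set M := b * N ^ a with hM
      have hM0 : 0 < M := by rw [hM]; positivity
      set r := N / M with hr
      have hr0 : 0 < r := div_pos hN0 hM0
      have hr8 : r ≤ 1 / 8 := by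
        rw [hr, div_le_div_iff₀ hM0 (by norm_num)]; linarith
      have hNMr : N = M * r := by rw [hr]; field_simp
      have hMN : M - N = M * (1 - r) := by rw [hNMr]; ring
      have h1r : 0 < 1 - r := by linarith
      have hMN0 : 0 < M - N := by rw [hMN]; positivity
      have hbase : M / (M - N) = (1 - r)⁻¹ := by
        rw [hMN]; field_simp
      have hL : Real.log (M / (M - N)) ≤ r + 7/8 * r^2 := by
        rw [hbase, Real.log_inv]
        exact neg_log_le_aux r hr0.le hr8
      have hLpos : 0 < M - N + 1/2 := by linarith
      have hstep : f N ≤ -N + (r + 7/8 * r^2) * (M - N + 1/2) := by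
        simp only [hfdef, ← hM]
        have := mul_le_mul_of_nonneg_right hL hLpos.le
        linarith
      have hMr2 : M * r^2 = N ^ (2 - a) / b := by
        have : M * r^2 = N^2 / M := by rw [hNMr]; field_simp
        rw [this, hM]
        rw [show N^2 = N ^ (2:ℝ) by rw [← Real.rpow_natCast N 2]; norm_num]
        rw [Real.rpow_sub hN0]
        field_simp
      have halg : -N + (r + 7/8 * r^2) * (M - N + 1/2) ≤ -(M * r^2 / 8) + 1 := by
        rw [hNMr]
        nlinarith [mul_pos hM0 (mul_pos hr0 (mul_pos hr0 hr0))]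
      calc f N ≤ -N + (r + 7/8 * r^2) * (M - N + 1/2) := hstep
        _ ≤ -(M * r^2 / 8) + 1 := halg
        _ = -(N ^ (2 - a) / (8 * b)) + 1 := by rw [hMr2]; ring
    · apply tendsto_atBot_add_const_right
      apply tendsto_neg_atTop_atBot.comp
      exact (tendsto_rpow_atTop h2a).atTop_div_const (by positivity)
  -- conclude
  apply (Real.tendsto_exp_atBot.comp hfb).congr'
  filter_upwards [hev] with N hN
  obtain ⟨h1, h2⟩ := hN
  obtain ⟨hN0, h8N⟩ := hfacts N h1 h2
  have hMN0 : 0 < b * N ^ a - N := by linarith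
  have hbase0 : 0 < b * N ^ a / (b * N ^ a - N) := by positivity
  have he1 : (0:ℝ) < 1 / Real.exp 1 := by positivity
  rw [Function.comp_apply, hfdef]
  rw [Real.exp_add, Real.rpow_def_of_pos he1, Real.rpow_def_of_pos hbase0]
  congr 1
  rw [one_div, Real.log_inv, Real.log_exp]
  ring
end

section
/- For b > 0, the limit as N → ∞ of (1/e)^N · (bN^2/(bN^2 - N))^{bN^2 - N + 1/2} equals e^{-1/(2b)}. -/
open Filter

lemma aux_log_slope :
    Tendsto (fun t : ℝ => Real.log (1 - t) / t) (nhdsWithin 0 {(0:ℝ)}ᶜ) (nhds (-1)) := by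
  have h : HasDerivAt (fun t : ℝ => Real.log (1 - t)) (-1) 0 := by
    have h1 : HasDerivAt (fun t : ℝ => 1 - t) (-1) 0 := by
      exact (hasDerivAt_id (0:ℝ)).const_sub (1:ℝ)
    have h2 := (Real.hasDerivAt_log (by norm_num : (1:ℝ) - 0 ≠ 0)).comp 0 h1
    exact h2.congr_deriv (by norm_num)
  have := hasDerivAt_iff_tendsto_slope.mp h
  refine this.congr ?_
  intro t
  simp [slope_fun_def, Real.log_one, div_eq_inv_mul, mul_comm]

lemma aux_half :
    Tendsto (fun t : ℝ => (t + (1 - t) * Real.log (1 - t)) / t ^ 2)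
      (nhdsWithin 0 (Set.Ioi 0)) (nhds (1/2)) := by
  have hev : ∀ᶠ t : ℝ in nhdsWithin 0 (Set.Ioi 0), t < 1 := by
    filter_upwards [inter_mem (nhdsWithin_le_nhds (Iio_mem_nhds (by norm_num : (0:ℝ) < 1)))
      self_mem_nhdsWithin] with t ht
    exact ht.1
  apply HasDerivAt.lhopital_zero_nhdsGT
    (f' := fun t => -Real.log (1 - t)) (g' := fun t => 2 * t)
  · filter_upwards [hev] with t ht
    have h1 : HasDerivAt (fun t : ℝ => 1 - t) (-1) t := by
      exact (hasDerivAt_id t).const_sub (1:ℝ)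
    have hne : (1:ℝ) - t ≠ 0 := by linarith
    have h2 : HasDerivAt (fun t : ℝ => Real.log (1 - t)) (-(1-t)⁻¹) t := by
      exact ((Real.hasDerivAt_log hne).comp t h1).congr_deriv (by ring)
    have h3 := (h1.mul h2).const_add 0
    have h4 := (hasDerivAt_id t).add (h1.mul h2)
    exact h4.congr_deriv (by rw [mul_neg, mul_inv_cancel₀ hne]; ring)
  · filter_upwards with t
    simpa [mul_comm] using (hasDerivAt_pow 2 t)
  · filter_upwards [self_mem_nhdsWithin] with t ht
    have : (0:ℝ) < t := ht
    positivity
  · have hlog : Tendsto (fun t : ℝ => Real.log (1 - t)) (nhds 0) (nhds 0) := by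
      have h1 : Tendsto (fun t : ℝ => 1 - t) (nhds (0:ℝ)) (nhds 1) := by
        simpa using (continuous_sub_left (1:ℝ)).tendsto (0:ℝ)
      simpa [Function.comp_def] using (Real.continuousAt_log (by norm_num : (1:ℝ) ≠ 0)).tendsto.comp h1
    have : Tendsto (fun t : ℝ => t + (1 - t) * Real.log (1 - t)) (nhds 0) (nhds 0) := by
      have h2 : Tendsto (fun t : ℝ => 1 - t) (nhds (0:ℝ)) (nhds 1) := by
        simpa using (continuous_sub_left (1:ℝ)).tendsto (0:ℝ)
      have := (tendsto_id.add (h2.mul hlog))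
      simpa using this
    exact this.mono_left nhdsWithin_le_nhds
  · have : Tendsto (fun t : ℝ => t ^ 2) (nhds (0:ℝ)) (nhds 0) := by
      simpa using (continuous_pow 2).tendsto (0:ℝ)
    exact this.mono_left nhdsWithin_le_nhds
  · have h1 : Tendsto (fun t : ℝ => Real.log (1 - t) / t) (nhdsWithin 0 (Set.Ioi 0))
        (nhds (-1)) :=
      aux_log_slope.mono_left (nhdsWithin_mono 0 (fun t ht => ne_of_gt ht))
    have h2 := h1.const_mul (-(1/2) : ℝ)
    have : (-(1/2) : ℝ) * (-1) = 1/2 := by norm_num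
    rw [this] at h2
    refine h2.congr ?_
    intro t
    field_simp

/-- For `b > 0`, the limit as `N → ∞` (over positive reals) of
`(1/e)^N · (bN^2/(bN^2 - N))^{bN^2 - N + 1/2}` equals `e^{-1/(2b)}`. -/
theorem stirling_limit_quadratic (b : ℝ) (hb : 0 < b) :
    Tendsto (fun N : ℝ =>
        (1 / Real.exp 1) ^ N *
          (b * N ^ 2 / (b * N ^ 2 - N)) ^ (b * N ^ 2 - N + 1 / 2))
      atTop (nhds (Real.exp (-1 / (2 * b)))) := by
  have hb' : b ≠ 0 := ne_of_gt hb
  -- the limit of the auxiliary function φ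
  have hφlim : Tendsto (fun t : ℝ => -(1/b) * ((t + (1 - t) * Real.log (1 - t)) / t ^ 2)
      - (1/2) * Real.log (1 - t)) (nhdsWithin 0 (Set.Ioi 0)) (nhds (-1/(2*b))) := by
    have h1 := aux_half.const_mul (-(1/b) : ℝ)
    have hlog : Tendsto (fun t : ℝ => (1/2) * Real.log (1 - t)) (nhds (0:ℝ)) (nhds 0) := by
      have h2 : Tendsto (fun t : ℝ => 1 - t) (nhds (0:ℝ)) (nhds 1) := by
        simpa using (continuous_sub_left (1:ℝ)).tendsto (0:ℝ)
      have h3 := (Real.continuousAt_log (by norm_num : (1:ℝ) ≠ 0)).tendsto.comp h2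
      simpa using h3.const_mul (1/2 : ℝ)
    have h4 := h1.sub (hlog.mono_left nhdsWithin_le_nhds)
    have h5 : -(1/b) * (1/2) - 0 = -1/(2*b) := by
      field_simp
      ring
    rwa [h5] at h4
  have ht : Tendsto (fun N : ℝ => 1/(b*N)) atTop (nhdsWithin 0 (Set.Ioi 0)) := by
    rw [tendsto_nhdsWithin_iff]
    constructor
    · have h6 : Tendsto (fun N : ℝ => b*N) atTop atTop :=
        Tendsto.const_mul_atTop hb tendsto_id
      have h7 := h6.inv_tendsto_atTop
      simp only [one_div]
      exact h7
    · filter_upwards [eventually_gt_atTop (0:ℝ)] with N hN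
      have : (0:ℝ) < 1/(b*N) := by positivity
      exact this
  have hcomp := hφlim.comp ht
  -- limit of the logarithm of the expression
  have hg : Tendsto (fun N : ℝ => -N + (b*N^2 - N + 1/2) *
      Real.log (b*N^2/(b*N^2 - N))) atTop (nhds (-1/(2*b))) := by
    refine hcomp.congr' ?_
    filter_upwards [eventually_gt_atTop (1/b), eventually_gt_atTop (0:ℝ)] with N h1 h0
    have hN : N ≠ 0 := ne_of_gt h0
    have hbN : 1 < b * N := by
      rw [div_lt_iff₀ hb] at h1; linarith [mul_comm b N ▸ h1]
    have hpos : 0 < b*N^2 - N := by nlinarith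
    have harg : (1:ℝ) - 1/(b*N) = ((b*N^2)/(b*N^2 - N))⁻¹ := by
      rw [inv_div]
      field_simp
    have hlogeq : Real.log (1 - 1/(b*N)) = - Real.log (b*N^2/(b*N^2 - N)) := by
      rw [harg, Real.log_inv]
    show -(1/b) * ((1/(b*N) + (1 - 1/(b*N)) * Real.log (1 - 1/(b*N))) / (1/(b*N)) ^ 2)
        - (1/2) * Real.log (1 - 1/(b*N))
      = -N + (b*N^2 - N + 1/2) * Real.log (b*N^2/(b*N^2 - N))
    rw [hlogeq]
    set L := Real.log (b*N^2/(b*N^2 - N)) with hL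
    field_simp
    ring
  -- conclude via exp
  have hexp := (Real.continuous_exp.tendsto (-1/(2*b))).comp hg
  refine hexp.congr' ?_
  filter_upwards [eventually_gt_atTop (1/b), eventually_gt_atTop (0:ℝ)] with N h1 h0
  have hbN : 1 < b * N := by
    rw [div_lt_iff₀ hb] at h1; linarith [mul_comm b N ▸ h1]
  have hpos : 0 < b*N^2 - N := by nlinarith
  have hr : 0 < b*N^2/(b*N^2 - N) := div_pos (by positivity) hpos
  show Real.exp (-N + (b*N^2 - N + 1/2) * Real.log (b*N^2/(b*N^2 - N)))
    = (1 / Real.exp 1) ^ N * (b * N ^ 2 / (b * N ^ 2 - N)) ^ (b * N ^ 2 - N + 1 / 2)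
  rw [Real.rpow_def_of_pos (by positivity : (0:ℝ) < 1/Real.exp 1),
    Real.rpow_def_of_pos hr, ← Real.exp_add]
  simp only [one_div, Real.log_inv, Real.log_exp]
  congr 1
  ring
end

section
/- For any b > 0, e^{-1/(2b)} plus the integral from 0 to 1 of γ·((1-γ)/b)·e^{γ(γ-2)/(2b)} dγ equals (√(2πb)/2)·erfi(1/√(2b))·e^{-1/(2b)}, where erfi(x) = (2/√π)·∑_{n=0}^∞ x^{2n+1}/(n!(2n+1)). -/
open scoped Real
open MeasureTheory intervalIntegral


lemma exp_tsum (x : ℝ) : Real.exp x = ∑' n : ℕ, x ^ n / n.factorial := by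
  rw [Real.exp_eq_exp_ℝ, NormedSpace.exp_eq_tsum_div]

lemma integral_exp_sq (c : ℝ) (hc : 0 ≤ c) :
    ∫ t in (0:ℝ)..c, Real.exp (t ^ 2)
      = ∑' n : ℕ, c ^ (2 * n + 1) / (n.factorial * (2 * n + 1)) := by
  have hF_int : ∀ n : ℕ,
      IntegrableOn (fun t : ℝ => t ^ (2 * n) / n.factorial) (Set.Ioc 0 c) := by
    intro n
    exact (Continuous.integrableOn_Ioc (by continuity))
  have hval : ∀ n : ℕ, (∫ t in Set.Ioc (0:ℝ) c, t ^ (2 * n) / n.factorial)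
      = c ^ (2 * n + 1) / (n.factorial * (2 * n + 1)) := by
    intro n
    rw [← intervalIntegral.integral_of_le hc]
    rw [intervalIntegral.integral_div, integral_pow]
    rw [zero_pow (by omega), sub_zero, div_div]
    push_cast
    ring
  have hnorm : ∀ n : ℕ, (∫ t in Set.Ioc (0:ℝ) c, ‖t ^ (2 * n) / (n.factorial : ℝ)‖)
      = c ^ (2 * n + 1) / (n.factorial * (2 * n + 1)) := by
    intro n
    rw [← hval n]
    apply setIntegral_congr_fun measurableSet_Ioc
    intro t ht
    show ‖t ^ (2 * n) / (n.factorial : ℝ)‖ = t ^ (2 * n) / (n.factorial : ℝ)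
    rw [Real.norm_of_nonneg]
    have : (0:ℝ) ≤ t ^ (2 * n) := by
      rw [pow_mul]; positivity
    positivity
  have hsum : Summable (fun n : ℕ => c ^ (2 * n + 1) / (n.factorial * (2 * n + 1))) := by
    apply Summable.of_nonneg_of_le (fun n => by positivity) (fun n => ?_)
      ((Real.summable_pow_div_factorial (c ^ 2)).mul_left c)
    have h1 : c ^ (2 * n + 1) = c * (c ^ 2) ^ n := by rw [← pow_mul]; ring
    have h2 : (n.factorial : ℝ) ≤ (n.factorial : ℝ) * (2 * n + 1) := by
      have hf : (0:ℝ) < n.factorial := by positivity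
      nlinarith
    calc c ^ (2 * n + 1) / ((n.factorial : ℝ) * (2 * n + 1))
        ≤ c ^ (2 * n + 1) / (n.factorial : ℝ) := by
          apply div_le_div_of_nonneg_left (by positivity) (by positivity) h2
      _ = c * ((c ^ 2) ^ n / n.factorial) := by rw [h1]; ring
  have key := integral_tsum_of_summable_integral_norm
    (μ := volume.restrict (Set.Ioc (0:ℝ) c)) hF_int (by simpa only [hnorm] using hsum)
  rw [intervalIntegral.integral_of_le hc]
  calc (∫ t in Set.Ioc (0:ℝ) c, Real.exp (t ^ 2))
      = ∫ t in Set.Ioc (0:ℝ) c, ∑' n : ℕ, t ^ (2 * n) / n.factorial := by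
        apply setIntegral_congr_fun measurableSet_Ioc
        intro t _
        show Real.exp (t ^ 2) = ∑' n : ℕ, t ^ (2 * n) / n.factorial
        rw [exp_tsum]
        exact tsum_congr fun n => by rw [pow_mul]
    _ = ∑' n : ℕ, ∫ t in Set.Ioc (0:ℝ) c, t ^ (2 * n) / n.factorial := key.symm
    _ = ∑' n : ℕ, c ^ (2 * n + 1) / (n.factorial * (2 * n + 1)) := tsum_congr hval

/-- The imaginary error function, defined by its power series
`erfi(x) = (2/√π)·∑_{n≥0} x^{2n+1}/(n!(2n+1))`. -/
noncomputable def erfi (x : ℝ) : ℝ :=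
  (2 / Real.sqrt π) * ∑' n : ℕ, x ^ (2 * n + 1) / (n.factorial * (2 * n + 1))

lemma hasDeriv_aux (b : ℝ) (hb : 0 < b) (γ : ℝ) :
    HasDerivAt (fun x : ℝ => -x * Real.exp (x * (x - 2) / (2 * b)))
      (γ * ((1 - γ) / b) * Real.exp (γ * (γ - 2) / (2 * b))
        - Real.exp (γ * (γ - 2) / (2 * b))) γ := by
  have h1 : HasDerivAt (fun x : ℝ => x * (x - 2) / (2 * b)) ((2 * γ - 2) / (2 * b)) γ := by
    have h := ((hasDerivAt_id γ).mul ((hasDerivAt_id γ).sub_const 2)).div_const (2 * b)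
    convert h using 1
    · rfl
    · rfl
    · rfl
    simp only [id_eq]
    ring
  have h3 := ((hasDerivAt_id γ).neg).mul h1.exp
  convert h3 using 1
  · rfl
  · rfl
  · rfl
  simp only [Pi.neg_apply, id_eq]
  field_simp
  ring

/-- For any `b > 0`, the expectation of the separation ratio:
`e^{-1/(2b)} + ∫₀¹ γ·((1-γ)/b)·e^{γ(γ-2)/(2b)} dγ
  = (√(2πb)/2)·erfi(1/√(2b))·e^{-1/(2b)}`. -/
theorem expectation_separation_ratio (b : ℝ) (hb : 0 < b) :
    Real.exp (-1 / (2 * b)) +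
      ∫ γ in (0:ℝ)..1, γ * ((1 - γ) / b) * Real.exp (γ * (γ - 2) / (2 * b))
    = (Real.sqrt (2 * π * b) / 2) * erfi (1 / Real.sqrt (2 * b)) *
        Real.exp (-1 / (2 * b)) := by
  have hb2 : (0:ℝ) < 2 * b := by linarith
  have hs : (0:ℝ) < Real.sqrt (2 * b) := Real.sqrt_pos.mpr hb2
  have hcont1 : Continuous fun γ : ℝ => γ * ((1 - γ) / b) * Real.exp (γ * (γ - 2) / (2 * b)) := by
    continuity
  have hcont2 : Continuous fun γ : ℝ => Real.exp (γ * (γ - 2) / (2 * b)) := by continuity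
  -- Step 1: the integral equals ∫ e^h − e^{-1/(2b)}
  have step1 : (∫ γ in (0:ℝ)..1, γ * ((1 - γ) / b) * Real.exp (γ * (γ - 2) / (2 * b)))
      = (∫ γ in (0:ℝ)..1, Real.exp (γ * (γ - 2) / (2 * b))) - Real.exp (-1 / (2 * b)) := by
    have hftc := intervalIntegral.integral_eq_sub_of_hasDerivAt
      (f := fun x : ℝ => -x * Real.exp (x * (x - 2) / (2 * b)))
      (fun γ _ => hasDeriv_aux b hb γ)
      (((hcont1.sub hcont2)).intervalIntegrable 0 1)
    rw [intervalIntegral.integral_sub (hcont1.intervalIntegrable 0 1)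
      (hcont2.intervalIntegrable 0 1)] at hftc
    have : (-1 : ℝ) * Real.exp (1 * (1 - 2) / (2 * b)) - -0 * Real.exp (0 * (0 - 2) / (2 * b))
        = -Real.exp (-1 / (2 * b)) := by norm_num
    rw [this] at hftc
    linarith
  -- Step 2: reflection
  have step2 : (∫ γ in (0:ℝ)..1, Real.exp (γ * (γ - 2) / (2 * b)))
      = Real.exp (-1 / (2 * b)) * ∫ u in (0:ℝ)..1, Real.exp (u ^ 2 / (2 * b)) := by
    have h1 : (∫ γ in (0:ℝ)..1, Real.exp (γ * (γ - 2) / (2 * b)))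
        = ∫ γ in (0:ℝ)..1, Real.exp (-1 / (2 * b)) * Real.exp ((1 - γ) ^ 2 / (2 * b)) := by
      apply intervalIntegral.integral_congr
      intro γ _
      show Real.exp (γ * (γ - 2) / (2 * b)) = Real.exp (-1 / (2 * b)) * Real.exp ((1 - γ) ^ 2 / (2 * b))
      rw [← Real.exp_add]
      congr 1
      field_simp
      ring
    rw [h1, intervalIntegral.integral_const_mul]
    congr 1
    have := intervalIntegral.integral_comp_sub_left
      (a := (0:ℝ)) (b := (1:ℝ)) (fun u : ℝ => Real.exp (u ^ 2 / (2 * b))) 1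
    simpa using this
  -- Step 3: scaling
  have step3 : (∫ u in (0:ℝ)..1, Real.exp (u ^ 2 / (2 * b)))
      = Real.sqrt (2 * b) * ∫ t in (0:ℝ)..(1 / Real.sqrt (2 * b)), Real.exp (t ^ 2) := by
    have hmul := intervalIntegral.integral_comp_mul_left
      (a := (0:ℝ)) (b := 1 / Real.sqrt (2 * b))
      (fun u : ℝ => Real.exp (u ^ 2 / (2 * b))) (ne_of_gt hs)
    have hsq : Real.sqrt (2 * b) ^ 2 = 2 * b := Real.sq_sqrt hb2.le
    have heq : ∀ x : ℝ, Real.exp ((Real.sqrt (2 * b) * x) ^ 2 / (2 * b)) = Real.exp (x ^ 2) := by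
      intro x
      congr 1
      rw [mul_pow, hsq]
      field_simp
    simp only [heq, mul_zero, mul_one_div, div_self (ne_of_gt hs)] at hmul
    rw [hmul, smul_eq_mul, ← mul_assoc, mul_inv_cancel₀ (ne_of_gt hs), one_mul]
  -- Combine
  rw [step1, step2, step3, integral_exp_sq _ (by positivity)]
  rw [erfi]
  have hsqrtpi : (0:ℝ) < Real.sqrt π := Real.sqrt_pos.mpr Real.pi_pos
  have hfac : Real.sqrt (2 * π * b) = Real.sqrt π * Real.sqrt (2 * b) := by
    rw [← Real.sqrt_mul Real.pi_pos.le]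
    congr 1
    ring
  rw [hfac]
  field_simp
  ring
end

section
/- The function E(b) = 1/2 + (√(2πb)/4)·erfi(1/√(2b))·e^{-1/(2b)} is strictly increasing on (0, ∞), tends to 1/2 as b → 0+, and tends to 1 as b → ∞; in particular its range is contained in (1/2, 1). -/
open scoped Real
open Filter

/-- The expected training accuracy `E(b) = 1/2 + (√(2πb)/4)·erfi(1/√(2b))·e^{-1/(2b)}`. -/
noncomputable def expAcc (b : ℝ) : ℝ :=
  1 / 2 + (Real.sqrt (2 * π * b) / 4) * erfi (1 / Real.sqrt (2 * b)) *
    Real.exp (-1 / (2 * b))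

open MeasureTheory intervalIntegral

noncomputable def S (t : ℝ) : ℝ := ∑' n : ℕ, t ^ n / (n.factorial * (2 * n + 1))
noncomputable def F (t : ℝ) : ℝ := Real.exp (-t) * S t

lemma summable_S (t : ℝ) :
    Summable (fun n : ℕ => t ^ n / (n.factorial * (2 * n + 1))) := by
  apply Summable.of_norm_bounded (Real.summable_pow_div_factorial |t|)
  intro n
  have h1 : (0:ℝ) < n.factorial := by positivity
  rw [norm_div, norm_pow, Real.norm_eq_abs, Real.norm_of_nonneg (by positivity)]
  refine div_le_div_of_nonneg_left ?_ h1 ?_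
  · positivity
  · refine le_mul_of_one_le_right h1.le ?_
    have : (0:ℝ) ≤ (n:ℝ) := n.cast_nonneg
    linarith

lemma integral_term (t : ℝ) (n : ℕ) :
    ∫ s in Set.Ioc (0:ℝ) 1, (t * s ^ 2) ^ n / n.factorial
      = t ^ n / (n.factorial * (2 * n + 1)) := by
  rw [← intervalIntegral.integral_of_le zero_le_one]
  have h : ∀ s : ℝ, (t * s ^ 2) ^ n / n.factorial = (t ^ n / n.factorial) * s ^ (2 * n) := by
    intro s; rw [mul_pow, ← pow_mul]; ring
  simp_rw [h]
  rw [intervalIntegral.integral_const_mul, integral_pow]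
  have h1 : (n.factorial : ℝ) ≠ 0 := by positivity
  have h2 : ((2 * n : ℕ) : ℝ) + 1 ≠ 0 := by positivity
  push_cast
  field_simp
  simp

lemma S_eq (t : ℝ) (ht : 0 ≤ t) :
    S t = ∫ s in (0:ℝ)..1, Real.exp (t * s ^ 2) := by
  rw [intervalIntegral.integral_of_le zero_le_one]
  have hexp : ∀ s : ℝ, Real.exp (t * s ^ 2) = ∑' n : ℕ, (t * s ^ 2) ^ n / n.factorial := by
    intro s
    rw [Real.exp_eq_exp_ℝ, NormedSpace.exp_eq_tsum_div]
  simp_rw [hexp]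
  have h_int : ∀ n : ℕ, Integrable (fun s : ℝ => (t * s ^ 2) ^ n / n.factorial)
      (volume.restrict (Set.Ioc 0 1)) := by
    intro n
    exact (((continuous_const.mul (continuous_pow 2)).pow n).div_const _).integrableOn_Ioc
  have h_norm : ∀ n : ℕ, (∫ s in Set.Ioc (0:ℝ) 1, ‖(t * s ^ 2) ^ n / (n.factorial:ℝ)‖)
      = t ^ n / (n.factorial * (2 * n + 1)) := by
    intro n
    rw [← integral_term t n]
    congr 1
    funext s
    exact Real.norm_of_nonneg (by positivity)
  rw [← MeasureTheory.integral_tsum_of_summable_integral_norm h_int ?_]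
  · unfold S
    congr 1
    funext n
    exact (integral_term t n).symm
  · rw [show (fun n : ℕ => ∫ s in Set.Ioc (0:ℝ) 1, ‖(t * s ^ 2) ^ n / (n.factorial:ℝ)‖)
        = fun n : ℕ => t ^ n / (n.factorial * (2 * n + 1)) from funext h_norm]
    exact summable_S t

lemma F_eq (t : ℝ) (ht : 0 ≤ t) :
    F t = ∫ s in (0:ℝ)..1, Real.exp (-(t * (1 - s ^ 2))) := by
  rw [F, S_eq t ht, ← intervalIntegral.integral_const_mul]
  congr 1
  funext s
  rw [← Real.exp_add]
  ring_nf

lemma cont_integrand (t : ℝ) : Continuous (fun s : ℝ => Real.exp (-(t * (1 - s ^ 2)))) :=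
  Real.continuous_exp.comp ((continuous_const.mul (continuous_const.sub (continuous_pow 2))).neg)

lemma F_lt (t₁ t₂ : ℝ) (h0 : 0 ≤ t₁) (h : t₁ < t₂) : F t₂ < F t₁ := by
  rw [F_eq t₁ h0, F_eq t₂ (h0.trans h.le), ← sub_pos,
    ← intervalIntegral.integral_sub ((cont_integrand t₁).intervalIntegrable 0 1)
      ((cont_integrand t₂).intervalIntegrable 0 1)]
  apply intervalIntegral_pos_of_pos_on
  · exact ((cont_integrand t₁).sub (cont_integrand t₂)).intervalIntegrable 0 1
  · intro s hs
    have h1 : 0 < 1 - s ^ 2 := by nlinarith [hs.1, hs.2]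
    have : -(t₂ * (1 - s ^ 2)) < -(t₁ * (1 - s ^ 2)) := by nlinarith
    simpa [sub_pos] using Real.exp_lt_exp.2 this
  · exact zero_lt_one

lemma F_zero : F 0 = 1 := by
  rw [F_eq 0 le_rfl]
  simp

lemma F_pos (t : ℝ) (ht : 0 ≤ t) : 0 < F t := by
  rw [F_eq t ht]
  apply intervalIntegral_pos_of_pos_on ((cont_integrand t).intervalIntegrable 0 1)
    (fun s _ => Real.exp_pos _) zero_lt_one

lemma F_lt_one (t : ℝ) (ht : 0 < t) : F t < 1 := F_zero ▸ F_lt 0 t le_rfl ht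

lemma F_le_one (t : ℝ) (ht : 0 ≤ t) : F t ≤ 1 := by
  rcases eq_or_lt_of_le ht with h | h
  · rw [← h, F_zero]
  · exact (F_lt_one t h).le

lemma exp_le_F (t : ℝ) (ht : 0 ≤ t) : Real.exp (-t) ≤ F t := by
  rw [F_eq t ht]
  have : Real.exp (-t) = ∫ s in (0:ℝ)..1, Real.exp (-t) := by simp
  rw [this]
  apply intervalIntegral.integral_mono_on zero_le_one
    (intervalIntegrable_const) ((cont_integrand t).intervalIntegrable 0 1)
  intro s hs
  apply Real.exp_le_exp.2
  nlinarith [hs.1, hs.2]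

set_option maxHeartbeats 2000000 in
lemma F_le_inv (t : ℝ) (ht : 0 < t) : F t ≤ 1 / t := by
  have key : (∫ s in (0:ℝ)..1, Real.exp (-(t * (1 - s)))) = 1 / t - Real.exp (-t) / t := by
    have hderiv : ∀ s ∈ Set.uIcc (0:ℝ) 1,
        HasDerivAt (fun s : ℝ => Real.exp (-(t * (1 - s))) / t)
          (Real.exp (-(t * (1 - s)))) s := by
      intro s _
      have h1 : HasDerivAt (fun s : ℝ => -(t * (1 - s))) t s := by
        simpa using (((hasDerivAt_id s).const_sub 1).const_mul t).fun_neg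
      have h2 := (h1.exp).div_const t
      simpa [mul_div_assoc, mul_div_cancel_right₀ _ ht.ne'] using h2
    have hcont : Continuous (fun s : ℝ => Real.exp (-(t * (1 - s)))) :=
      Real.continuous_exp.comp ((continuous_const.mul (continuous_const.sub continuous_id')).neg)
    have := intervalIntegral.integral_eq_sub_of_hasDerivAt hderiv (hcont.intervalIntegrable 0 1)
    rw [this]
    norm_num
  have hle : F t ≤ ∫ s in (0:ℝ)..1, Real.exp (-(t * (1 - s))) := by
    rw [F_eq t ht.le]
    apply intervalIntegral.integral_mono_on zero_le_one
      ((cont_integrand t).intervalIntegrable 0 1)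
      ((Real.continuous_exp.comp
        ((continuous_const.mul (continuous_const.sub continuous_id')).neg)).intervalIntegrable 0 1)
    intro s hs
    show Real.exp (-(t * (1 - s ^ 2))) ≤ Real.exp (-(t * (1 - s)))
    apply Real.exp_le_exp.2
    nlinarith [hs.1, hs.2, mul_nonneg (mul_nonneg ht.le hs.1) (sub_nonneg.2 hs.2)]
  have : Real.exp (-t) / t ≥ 0 := by positivity
  linarith [key ▸ hle]

lemma tendsto_F_zero : Tendsto F (nhdsWithin 0 (Set.Ioi 0)) (nhds 1) := by
  apply tendsto_of_tendsto_of_tendsto_of_le_of_le'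
    (g := fun t : ℝ => Real.exp (-t)) (h := fun _ : ℝ => (1:ℝ))
  · have : Tendsto (fun t : ℝ => Real.exp (-t)) (nhds 0) (nhds 1) := by
      have := (Real.continuous_exp.comp continuous_neg).tendsto 0
      simpa [Function.comp_def] using this
    exact this.mono_left nhdsWithin_le_nhds
  · exact tendsto_const_nhds
  · exact eventually_mem_nhdsWithin.mono (fun t ht => exp_le_F t (le_of_lt ht))
  · exact eventually_mem_nhdsWithin.mono (fun t ht => F_le_one t (le_of_lt ht))

lemma tendsto_F_top : Tendsto F atTop (nhds 0) := by
  apply tendsto_of_tendsto_of_tendsto_of_le_of_le'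
    (g := fun _ : ℝ => (0:ℝ)) (h := fun t : ℝ => 1 / t)
  · exact tendsto_const_nhds
  · simpa [one_div] using tendsto_inv_atTop_zero
  · exact (eventually_gt_atTop 0).mono (fun t ht => (F_pos t ht.le).le)
  · exact (eventually_gt_atTop 0).mono (fun t ht => F_le_inv t ht)

lemma expAcc_eq (b : ℝ) (hb : 0 < b) : expAcc b = 1 / 2 + F (1 / (2 * b)) / 2 := by
  have h2b : (0:ℝ) < 2 * b := by linarith
  have hs2b : (0:ℝ) < Real.sqrt (2 * b) := Real.sqrt_pos.2 h2b
  set x : ℝ := 1 / Real.sqrt (2 * b) with hx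
  have hx2 : x ^ 2 = 1 / (2 * b) := by
    rw [hx, div_pow, one_pow, Real.sq_sqrt h2b.le]
  have hterm : ∀ n : ℕ, x ^ (2 * n + 1) / (n.factorial * (2 * n + 1))
      = x * ((1 / (2 * b)) ^ n / (n.factorial * (2 * n + 1))) := by
    intro n
    rw [pow_succ, pow_mul, hx2]
    ring
  have htsum : (∑' n : ℕ, x ^ (2 * n + 1) / (n.factorial * (2 * n + 1)))
      = x * S (1 / (2 * b)) := by
    rw [S, ← tsum_mul_left]
    exact tsum_congr hterm
  have hπ : (0:ℝ) < π := Real.pi_pos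
  have hsπ : (0:ℝ) < Real.sqrt π := Real.sqrt_pos.2 hπ
  have hsqrt : Real.sqrt (2 * π * b) = Real.sqrt π * Real.sqrt (2 * b) := by
    rw [← Real.sqrt_mul hπ.le]
    ring_nf
  have hcoeff : Real.sqrt (2 * π * b) / 4 * ((2 / Real.sqrt π) * x) = 1 / 2 := by
    rw [hsqrt, hx]
    field_simp
    ring
  rw [expAcc, erfi, htsum, F]
  have hexp : Real.exp (-1 / (2 * b)) = Real.exp (-(1 / (2 * b))) := by
    rw [neg_div]
  rw [hexp]
  have : Real.sqrt (2 * π * b) / 4 * (2 / Real.sqrt π * (x * S (1 / (2 * b))))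
      * Real.exp (-(1 / (2 * b)))
      = (Real.sqrt (2 * π * b) / 4 * ((2 / Real.sqrt π) * x)) * S (1 / (2 * b))
      * Real.exp (-(1 / (2 * b))) := by ring
  rw [this, hcoeff]
  ring

lemma hmap_top : Tendsto (fun b : ℝ => 1 / (2 * b)) (nhdsWithin 0 (Set.Ioi 0)) atTop := by
  have h1 : Tendsto (fun b : ℝ => 2 * b) (nhdsWithin 0 (Set.Ioi 0))
      (nhdsWithin 0 (Set.Ioi 0)) := by
    apply tendsto_nhdsWithin_of_tendsto_nhds_of_eventually_within
    · have h0 : Continuous (fun b : ℝ => 2 * b) := continuous_const.mul continuous_id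
      have := (h0.tendsto (0:ℝ)).mono_left (nhdsWithin_le_nhds (s := Set.Ioi (0:ℝ)))
      simpa using this
    · exact eventually_mem_nhdsWithin.mono (fun b hb => by
        simp only [Set.mem_Ioi] at hb ⊢; linarith)
  have h2 := tendsto_inv_nhdsGT_zero.comp h1
  exact h2.congr (fun b => (one_div (2 * b)).symm)

lemma hmap_zero : Tendsto (fun b : ℝ => 1 / (2 * b)) atTop (nhdsWithin 0 (Set.Ioi 0)) := by
  apply tendsto_nhdsWithin_of_tendsto_nhds_of_eventually_within
  · have h2 : Tendsto (fun b : ℝ => 2 * b) atTop atTop :=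
      Tendsto.const_mul_atTop two_pos tendsto_id
    have h3 := tendsto_inv_atTop_zero.comp h2
    exact h3.congr (fun b => (one_div (2 * b)).symm)
  · exact (eventually_gt_atTop 0).mono (fun b hb => by
      simp only [Set.mem_Ioi]; positivity)


/-- `E(b)` is strictly increasing on `(0,∞)`, tends to `1/2` as `b → 0⁺`, tends to
`1` as `b → ∞`, and in particular takes values in `(1/2, 1)` on `(0,∞)`. -/
theorem expAcc_strictMono_and_limits :
    StrictMonoOn expAcc (Set.Ioi 0) ∧
    Tendsto expAcc (nhdsWithin 0 (Set.Ioi 0)) (nhds (1 / 2)) ∧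
    Tendsto expAcc atTop (nhds 1) ∧
    ∀ b : ℝ, 0 < b → expAcc b ∈ Set.Ioo (1 / 2 : ℝ) 1 := by
  refine ⟨?_, ?_, ?_, ?_⟩
  · intro a ha b hb hab
    simp only [Set.mem_Ioi] at ha hb
    rw [expAcc_eq a ha, expAcc_eq b hb]
    have h1 : 1 / (2 * b) < 1 / (2 * a) :=
      one_div_lt_one_div_of_lt (by linarith) (by linarith)
    have h2 := F_lt (1 / (2 * b)) (1 / (2 * a)) (by positivity) h1
    linarith
  · have h : Tendsto (fun b : ℝ => 1 / 2 + F (1 / (2 * b)) / 2)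
        (nhdsWithin 0 (Set.Ioi 0)) (nhds (1 / 2 + 0 / 2)) :=
      ((tendsto_F_top.comp hmap_top).div_const 2).const_add _
    rw [show (1:ℝ) / 2 + 0 / 2 = 1 / 2 by norm_num] at h
    apply h.congr'
    exact eventually_mem_nhdsWithin.mono (fun b hb => (expAcc_eq b hb).symm)
  · have h : Tendsto (fun b : ℝ => 1 / 2 + F (1 / (2 * b)) / 2)
        atTop (nhds (1 / 2 + 1 / 2)) :=
      ((tendsto_F_zero.comp hmap_zero).div_const 2).const_add _
    rw [show (1:ℝ) / 2 + 1 / 2 = 1 by norm_num] at h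
    apply h.congr'
    exact (eventually_gt_atTop 0).mono (fun b hb => (expAcc_eq b hb).symm)
  · intro b hb
    rw [expAcc_eq b hb]
    have h1 := F_pos (1 / (2 * b)) (by positivity)
    have h2 := F_lt_one (1 / (2 * b)) (by positivity)
    exact ⟨by linarith, by linarith⟩
end

section
/- Fix γ ∈ [0, 1] and b > 0, and set S = ⌊bN^2⌋ and m = ⌊γN⌋. Then S!·(S - m)^{N - m}/((S - m)!·S^N) tends to e^{γ(γ-2)/(2b)} as N → ∞. -/
set_option maxHeartbeats 1000000
open Filter Finset

lemma log_one_sub_le {x : ℝ} (h2 : x ≤ 1/2) : Real.log (1 - x) ≤ -x := by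
  have h1 : (0:ℝ) < 1 - x := by linarith
  have := Real.log_le_sub_one_of_pos h1
  linarith

lemma le_log_one_sub {x : ℝ} (h0 : 0 ≤ x) (h2 : x ≤ 1/2) :
    -x - 2*x^2 ≤ Real.log (1 - x) := by
  have h1 : (0:ℝ) < 1 - x := by linarith
  have h := Real.log_le_sub_one_of_pos (inv_pos.mpr h1)
  rw [Real.log_inv] at h
  have h3 : (1-x)⁻¹ ≤ 1 + x + 2*x^2 := by
    rw [inv_eq_one_div, div_le_iff₀ h1]; nlinarith
  linarith

lemma sum_range_id_real (m : ℕ) : ∑ i ∈ Finset.range m, (i:ℝ) = m*(m-1)/2 := by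
  induction m with
  | zero => simp
  | succ n ih => rw [Finset.sum_range_succ, ih]; push_cast; ring

/-- Fix `γ ∈ [0,1]` and `b > 0`, and set `S = ⌊bN²⌋`, `m = ⌊γN⌋`. Then the
incomplete-separation probability `S!·(S-m)^{N-m}/((S-m)!·S^N)` tends to
`e^{γ(γ-2)/(2b)}` as `N → ∞`. -/
theorem incomplete_separation_prob_tendsto (γ b : ℝ) (hγ : γ ∈ Set.Icc (0:ℝ) 1)
    (hb : 0 < b) :
    Tendsto (fun N : ℕ =>
        ((Nat.factorial ⌊b * (N : ℝ) ^ 2⌋₊ : ℝ) *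
            ((⌊b * (N : ℝ) ^ 2⌋₊ - ⌊γ * (N : ℝ)⌋₊ : ℕ) : ℝ) ^ (N - ⌊γ * (N : ℝ)⌋₊)) /
          ((Nat.factorial (⌊b * (N : ℝ) ^ 2⌋₊ - ⌊γ * (N : ℝ)⌋₊) : ℝ) *
            ((⌊b * (N : ℝ) ^ 2⌋₊ : ℕ) : ℝ) ^ N))
      atTop (nhds (Real.exp (γ * (γ - 2) / (2 * b)))) := by
  obtain ⟨hγ0, hγ1⟩ := hγ
  set f : ℕ → ℝ := fun N : ℕ =>
        ((Nat.factorial ⌊b * (N : ℝ) ^ 2⌋₊ : ℝ) *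
            ((⌊b * (N : ℝ) ^ 2⌋₊ - ⌊γ * (N : ℝ)⌋₊ : ℕ) : ℝ) ^ (N - ⌊γ * (N : ℝ)⌋₊)) /
          ((Nat.factorial (⌊b * (N : ℝ) ^ 2⌋₊ - ⌊γ * (N : ℝ)⌋₊) : ℝ) *
            ((⌊b * (N : ℝ) ^ 2⌋₊ : ℕ) : ℝ) ^ N) with hfdef
  set q : ℕ → ℝ := fun N => (⌊γ * (N:ℝ)⌋₊ : ℝ) / N with hqdef
  set r : ℕ → ℝ := fun N => (⌊b * (N:ℝ)^2⌋₊ : ℝ) / (N:ℝ)^2 with hrdef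
  set e : ℕ → ℝ := fun N => ((N:ℝ))⁻¹ with hedef
  have hq : Tendsto q atTop (nhds γ) :=
    (tendsto_nat_floor_mul_div_atTop hγ0).comp tendsto_natCast_atTop_atTop
  have hr : Tendsto r atTop (nhds b) :=
    (tendsto_nat_floor_mul_div_atTop hb.le).comp
      ((tendsto_pow_atTop two_ne_zero).comp (tendsto_natCast_atTop_atTop (R := ℝ)))
  have he : Tendsto e atTop (nhds 0) :=
    tendsto_inv_atTop_zero.comp tendsto_natCast_atTop_atTop
  set U : ℕ → ℝ := fun N => -(q N * (q N - e N) / (2 * r N)) - (1 - q N) * q N / r N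
    with hUdef
  set Lo : ℕ → ℝ := fun N =>
      U N - 2*(q N)^3/(r N)^2*(e N) - 2*(1 - q N)*(q N)^2/(r N)^2*(e N) with hLodef
  have hb2 : (2:ℝ) * b ≠ 0 := by positivity
  have hU : Tendsto U atTop (nhds (γ * (γ - 2) / (2 * b))) := by
    have h1 : Tendsto U atTop
        (nhds (-(γ * (γ - 0) / (2 * b)) - (1 - γ) * γ / b)) :=
      (((hq.mul (hq.sub he)).div (tendsto_const_nhds.mul hr) hb2).neg).sub
        (((tendsto_const_nhds.sub hq).mul hq).div hr hb.ne')
    have hval : -(γ * (γ - 0) / (2 * b)) - (1 - γ) * γ / b = γ * (γ - 2) / (2 * b) := by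
      field_simp; ring
    rwa [hval] at h1
  have hLo : Tendsto Lo atTop (nhds (γ * (γ - 2) / (2 * b))) := by
    have h1 : Tendsto (fun N => 2*(q N)^3/(r N)^2*(e N)) atTop (nhds (2*γ^3/b^2*0)) :=
      ((tendsto_const_nhds.mul (hq.pow 3)).div (hr.pow 2) (by positivity)).mul he
    have h2 : Tendsto (fun N => 2*(1 - q N)*(q N)^2/(r N)^2*(e N)) atTop
        (nhds (2*(1-γ)*γ^2/b^2*0)) :=
      (((tendsto_const_nhds.mul (tendsto_const_nhds.sub hq)).mul (hq.pow 2)).div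
        (hr.pow 2) (by positivity)).mul he
    rw [mul_zero] at h1 h2
    simpa using (hU.sub h1).sub h2
  have hG : ∀ᶠ N : ℕ in atTop, 1 ≤ N ∧ 2 * ⌊γ * (N:ℝ)⌋₊ < ⌊b * (N:ℝ)^2⌋₊ := by
    have hrlb : ∀ᶠ N : ℕ in atTop, b/2 < r N :=
      hr.eventually (eventually_gt_nhds (by linarith))
    have hNlb : ∀ᶠ N : ℕ in atTop, (4:ℝ)/(b/2) ≤ (N:ℝ) :=
      tendsto_natCast_atTop_atTop.eventually_ge_atTop _
    filter_upwards [hrlb, hNlb, eventually_ge_atTop 1] with N h1 h2 h3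
    refine ⟨h3, ?_⟩
    have hNpos : (0:ℝ) < N := by exact_mod_cast h3
    have h4 : (4:ℝ) ≤ b/2 * N := by
      rw [div_le_iff₀ (by linarith : (0:ℝ) < b/2)] at h2; linarith
    have hm_le : (⌊γ * (N:ℝ)⌋₊:ℝ) ≤ N := by
      have := Nat.floor_le (by positivity : (0:ℝ) ≤ γ * N)
      nlinarith
    have hS : b/2 * (N:ℝ)^2 < ⌊b * (N:ℝ)^2⌋₊ := by
      rw [hrdef] at h1
      simp only at h1
      rw [lt_div_iff₀ (by positivity)] at h1; linarith
    have : ((2 * ⌊γ * (N:ℝ)⌋₊ : ℕ):ℝ) < (⌊b * (N:ℝ)^2⌋₊:ℝ) := by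
      push_cast
      nlinarith
    exact_mod_cast this
  have key : ∀ᶠ N : ℕ in atTop,
      (Lo N ≤ Real.log (f N) ∧ Real.log (f N) ≤ U N) ∧ 0 < f N := by
    filter_upwards [hG] with N hN
    obtain ⟨hN1, h2m⟩ := hN
    set m : ℕ := ⌊γ * (N:ℝ)⌋₊ with hm
    set Sn : ℕ := ⌊b * (N:ℝ)^2⌋₊ with hSn
    clear_value m Sn
    have hmS : m ≤ Sn := by omega
    have hSr : (0:ℝ) < (Sn:ℝ) := by exact_mod_cast (by omega : 0 < Sn)
    have hNr : (0:ℝ) < (N:ℝ) := by exact_mod_cast hN1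
    have hmN : m ≤ N := by
      have h := Nat.floor_mono (show γ * (N:ℝ) ≤ ((N:ℕ):ℝ) by nlinarith)
      simpa [← hm] using h
    have h2mr : 2 * (m:ℝ) < (Sn:ℝ) := by exact_mod_cast h2m
    have hmr0 : (0:ℝ) ≤ (m:ℝ) := Nat.cast_nonneg m
    have hNm : ((N - m : ℕ):ℝ) = (N:ℝ) - m := by
      push_cast [Nat.cast_sub hmN]; ring
    have hNm0 : (0:ℝ) ≤ (N:ℝ) - (m:ℝ) := by
      rw [← hNm]; positivity
    -- rewrite f N as a product
    have hdesc : ((Sn.descFactorial m : ℕ):ℝ) = ∏ i ∈ Finset.range m, ((Sn:ℝ) - i) := by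
      rw [Nat.descFactorial_eq_prod_range, Nat.cast_prod]
      exact Finset.prod_congr rfl fun i hi =>
        Nat.cast_sub (le_trans (Finset.mem_range.mp hi).le hmS)
    have hfac : (Sn.factorial : ℝ) =
        ((Sn - m).factorial : ℝ) * ∏ i ∈ Finset.range m, ((Sn:ℝ) - i) := by
      rw [← hdesc]
      exact_mod_cast congrArg (Nat.cast (R := ℝ)) (Nat.factorial_mul_descFactorial hmS).symm
    have hcast : ((Sn - m : ℕ):ℝ) = (Sn:ℝ) - m := Nat.cast_sub hmS
    have hfacpos : (0:ℝ) < ((Sn - m).factorial : ℝ) := by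
      exact_mod_cast (Sn - m).factorial_pos
    have hprod_pos : ∀ i ∈ Finset.range m, (0:ℝ) < 1 - (i:ℝ)/Sn := by
      intro i hi
      have : (i:ℝ) < m := by exact_mod_cast Finset.mem_range.mp hi
      rw [sub_pos, div_lt_one hSr]; linarith
    have hmS2 : (0:ℝ) < 1 - (m:ℝ)/Sn := by
      rw [sub_pos, div_lt_one hSr]; linarith
    have hf : f N = (∏ i ∈ Finset.range m, (1 - (i:ℝ)/Sn)) * (1 - (m:ℝ)/Sn)^(N - m) := by
      rw [hfdef]
      simp only [← hm, ← hSn]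
      rw [hfac, hcast, show ((Sn:ℕ):ℝ)^N = (Sn:ℝ)^m * (Sn:ℝ)^(N-m) by
        rw [← pow_add]; congr 1; omega]
      have hp1 : ∏ i ∈ Finset.range m, (1 - (i:ℝ)/Sn)
          = (∏ i ∈ Finset.range m, ((Sn:ℝ) - i)) / (Sn:ℝ)^m := by
        rw [Finset.prod_congr rfl (fun i (_ : i ∈ Finset.range m) =>
          show (1 - (i:ℝ)/Sn) = ((Sn:ℝ) - i)/Sn by field_simp),
          Finset.prod_div_distrib, Finset.prod_const, Finset.card_range]
      have hp2 : (1 - (m:ℝ)/Sn) = ((Sn:ℝ) - m)/Sn := by field_simp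
      rw [hp1, hp2, div_pow]
      field_simp
    have hfpos : 0 < f N := by
      rw [hf]; exact mul_pos (Finset.prod_pos hprod_pos) (pow_pos hmS2 _)
    have hlog : Real.log (f N) = (∑ i ∈ Finset.range m, Real.log (1 - (i:ℝ)/Sn))
        + ((N - m : ℕ):ℝ) * Real.log (1 - (m:ℝ)/Sn) := by
      rw [hf, Real.log_mul (ne_of_gt (Finset.prod_pos hprod_pos))
        (ne_of_gt (pow_pos hmS2 _)), Real.log_pow,
        Real.log_prod (fun i hi => (hprod_pos i hi).ne')]
    have hx : ∀ i ∈ Finset.range m, (i:ℝ)/Sn ≤ 1/2 := by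
      intro i hi
      have : (i:ℝ) < m := by exact_mod_cast Finset.mem_range.mp hi
      rw [div_le_iff₀ hSr]; linarith
    have hxm : (m:ℝ)/Sn ≤ 1/2 := by rw [div_le_iff₀ hSr]; linarith
    -- sum bounds
    have hsum_up : ∑ i ∈ Finset.range m, Real.log (1 - (i:ℝ)/Sn)
        ≤ -((m:ℝ)*((m:ℝ)-1)/2/Sn) := by
      calc ∑ i ∈ Finset.range m, Real.log (1 - (i:ℝ)/Sn)
          ≤ ∑ i ∈ Finset.range m, -((i:ℝ)/Sn) :=
            Finset.sum_le_sum fun i hi => log_one_sub_le (hx i hi)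
        _ = -((∑ i ∈ Finset.range m, (i:ℝ))/Sn) := by
            rw [Finset.sum_neg_distrib, Finset.sum_div]
        _ = -((m:ℝ)*((m:ℝ)-1)/2/Sn) := by rw [sum_range_id_real]
    have hsq : ∑ i ∈ Finset.range m, ((i:ℝ)/Sn)^2 ≤ (m:ℝ)^3/(Sn:ℝ)^2 := by
      calc ∑ i ∈ Finset.range m, ((i:ℝ)/Sn)^2
          ≤ ∑ _i ∈ Finset.range m, ((m:ℝ)/Sn)^2 := by
            refine Finset.sum_le_sum fun i hi => ?_
            have h1 : (i:ℝ) ≤ m := le_of_lt (by exact_mod_cast Finset.mem_range.mp hi)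
            gcongr
        _ = (m:ℝ) * ((m:ℝ)/Sn)^2 := by
            rw [Finset.sum_const, Finset.card_range, nsmul_eq_mul]
        _ = (m:ℝ)^3/(Sn:ℝ)^2 := by rw [div_pow]; ring
    have hsum_lo : -((m:ℝ)*((m:ℝ)-1)/2/Sn) - 2*((m:ℝ)^3/(Sn:ℝ)^2)
        ≤ ∑ i ∈ Finset.range m, Real.log (1 - (i:ℝ)/Sn) := by
      have h1 : ∑ i ∈ Finset.range m, (-((i:ℝ)/Sn) - 2*((i:ℝ)/Sn)^2)
          ≤ ∑ i ∈ Finset.range m, Real.log (1 - (i:ℝ)/Sn) :=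
        Finset.sum_le_sum fun i hi => le_log_one_sub (by positivity) (hx i hi)
      have h2 : ∑ i ∈ Finset.range m, (-((i:ℝ)/Sn) - 2*((i:ℝ)/Sn)^2)
          = -((m:ℝ)*((m:ℝ)-1)/2/Sn) - 2*(∑ i ∈ Finset.range m, ((i:ℝ)/Sn)^2) := by
        rw [Finset.sum_sub_distrib, Finset.sum_neg_distrib, ← Finset.sum_div,
          sum_range_id_real, ← Finset.mul_sum]
      rw [h2] at h1
      linarith
    -- pow-term bounds
    have hpow_up : ((N:ℝ) - m) * Real.log (1 - (m:ℝ)/Sn)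
        ≤ -(((N:ℝ) - m) * ((m:ℝ)/Sn)) := by
      have := mul_le_mul_of_nonneg_left (log_one_sub_le hxm) hNm0
      rwa [mul_neg] at this
    have hpow_lo : -(((N:ℝ) - m) * ((m:ℝ)/Sn)) - 2*(((N:ℝ) - m) * ((m:ℝ)/Sn)^2)
        ≤ ((N:ℝ) - m) * Real.log (1 - (m:ℝ)/Sn) := by
      have := mul_le_mul_of_nonneg_left (le_log_one_sub (by positivity) hxm) hNm0
      nlinarith [this]
    -- U and Lo identities
    have hUval : U N = -((m:ℝ)*((m:ℝ)-1)/2/Sn) - ((N:ℝ) - m)*((m:ℝ)/Sn) := by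
      simp only [hUdef, hqdef, hrdef, hedef, ← hm, ← hSn]
      field_simp
    have hLoval : Lo N = U N - 2*((m:ℝ)^3/(Sn:ℝ)^2)
        - 2*(((N:ℝ) - m)*((m:ℝ)/Sn)^2) := by
      simp only [hLodef, hUdef, hqdef, hrdef, hedef, ← hm, ← hSn]
      field_simp
    refine ⟨⟨?_, ?_⟩, hfpos⟩
    · rw [hlog, hLoval, hUval, hNm]
      linarith
    · rw [hlog, hUval, hNm]
      linarith
  have hlogT : Tendsto (fun N => Real.log (f N)) atTop (nhds (γ * (γ - 2) / (2 * b))) :=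
    tendsto_of_tendsto_of_tendsto_of_le_of_le' hLo hU
      (key.mono fun N h => h.1.1) (key.mono fun N h => h.1.2)
  have hexp := (Real.continuous_exp.tendsto _).comp hlogT
  exact Tendsto.congr' (key.mono fun N h => Real.exp_log h.2) hexp
end
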